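/- (Lions dichotomy.) Let q ∈ (1, ∞) and let (u_j) ⊂ L_q(ℝ^n) with ∫|u_j|^q dx bounded away from 0 and ∞. Then, up to a subsequence, either (Concentration) there exist λ ∈ (0,1] and points x_j ∈ ℝ^n such that for every ε > 0 there are ρ > 0, ρ_j → +∞ and j_0 with |∫_{B_ρ(x_j)}|u_j|^q − λ∫_{ℝ^n}|u_j|^q| + |∫_{ℝ^n∖B_{ρ_j}(x_j)}|u_j|^q − (1−λ)∫_{ℝ^n}|u_j|^q| < ε ∫_{ℝ^n}|u_j|^q for all j ≥ j_0; or (Vanishing) for every ρ > 0, lim_j sup_{x∈ℝ^n} ∫_{B_ρ(x)} |u_j|^q dx = 0. -/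
import Mathlib
open MeasureTheory Filter Metric

lemma subseq_pi (Cb : ℝ) (F : ℕ → ℕ → ℝ) (hF : ∀ j m, F j m ∈ Set.Icc (0:ℝ) Cb) :
    ∃ (τ : ℕ → ℕ) (g : ℕ → ℝ), StrictMono τ ∧ (∀ m, g m ∈ Set.Icc (0:ℝ) Cb) ∧
      ∀ m, Tendsto (fun j => F (τ j) m) atTop (nhds (g m)) := by
  set X := ℕ → Set.Icc (0:ℝ) Cb
  obtain ⟨a, τ, hτ, ha⟩ := CompactSpace.tendsto_subseq (X := X) (fun j m => ⟨F j m, hF j m⟩)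
  refine ⟨τ, fun m => (a m : ℝ), hτ, fun m => (a m).2, fun m => ?_⟩
  exact (continuous_subtype_val.tendsto _).comp ((tendsto_pi_nhds.1 ha) m)

/-- Lions dichotomy: if `(u_j) ⊂ L_q(ℝⁿ)` has `∫|u_j|^q` bounded away from
`0` and `∞`, then up to a subsequence either concentration (with some weight `λ ∈ (0,1]`
and points `x_j`) or vanishing holds. -/
theorem statement8 (n : ℕ) (q : ℝ) (hq : 1 < q)
    (u : ℕ → EuclideanSpace ℝ (Fin n) → ℝ)
    (hint : ∀ j, Integrable (fun x => |u j x| ^ q) volume)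
    (c Cb : ℝ) (hc : 0 < c)
    (hlow : ∀ j, c ≤ ∫ x, |u j x| ^ q)
    (hup : ∀ j, ∫ x, |u j x| ^ q ≤ Cb) :
    ∃ σ : ℕ → ℕ, StrictMono σ ∧
      ((∃ lam : ℝ, lam ∈ Set.Ioc (0:ℝ) 1 ∧ ∃ x : ℕ → EuclideanSpace ℝ (Fin n),
        ∀ ε : ℝ, 0 < ε → ∃ ρ : ℝ, 0 < ρ ∧ ∃ ρs : ℕ → ℝ,
          Tendsto ρs atTop atTop ∧ ∃ j0 : ℕ, ∀ j ≥ j0,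
            |(∫ y in Metric.ball (x j) ρ, |u (σ j) y| ^ q)
                - lam * ∫ y, |u (σ j) y| ^ q|
            + |(∫ y in (Metric.ball (x j) (ρs j))ᶜ, |u (σ j) y| ^ q)
                - (1 - lam) * ∫ y, |u (σ j) y| ^ q|
            < ε * ∫ y, |u (σ j) y| ^ q)
      ∨ (∀ ρ : ℝ, 0 < ρ →
          Tendsto (fun j => ⨆ x : EuclideanSpace ℝ (Fin n),
            ∫ y in Metric.ball x ρ, |u (σ j) y| ^ q) atTop (nhds 0))) := by
  classical
  have hf0 : ∀ (j : ℕ) (y : EuclideanSpace ℝ (Fin n)), 0 ≤ |u j y| ^ q :=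
    fun j y => Real.rpow_nonneg (abs_nonneg _) q
  have hmono : ∀ (j : ℕ) (s t : Set (EuclideanSpace ℝ (Fin n))), s ⊆ t →
      (∫ y in s, |u j y| ^ q) ≤ ∫ y in t, |u j y| ^ q := by
    intro j s t hst
    exact setIntegral_mono_set (hint j).integrableOn
      (Eventually.of_forall fun y => hf0 j y) (HasSubset.Subset.eventuallyLE hst)
  have htot : ∀ (j : ℕ) (s : Set (EuclideanSpace ℝ (Fin n))),
      (∫ y in s, |u j y| ^ q) ≤ ∫ y, |u j y| ^ q := by
    intro j s
    calc (∫ y in s, |u j y| ^ q) ≤ ∫ y in Set.univ, |u j y| ^ q := hmono j s _ (Set.subset_univ s)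
    _ = ∫ y, |u j y| ^ q := setIntegral_univ
  have hnn : ∀ (j : ℕ) (s : Set (EuclideanSpace ℝ (Fin n))),
      0 ≤ ∫ y in s, |u j y| ^ q := fun j s => integral_nonneg (fun y => hf0 j y)
  by_cases hP : ∀ ρ : ℝ, 0 < ρ →
      Tendsto (fun j => ⨆ x : EuclideanSpace ℝ (Fin n),
        ∫ y in Metric.ball x ρ, |u j y| ^ q) atTop (nhds 0)
  · exact ⟨id, strictMono_id, Or.inr hP⟩
  push_neg at hP
  obtain ⟨ρ0, hρ0, hnt⟩ := hP
  set a : ℕ → ℝ := fun j => ⨆ x : EuclideanSpace ℝ (Fin n),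
    ∫ y in Metric.ball x ρ0, |u j y| ^ q with ha_def
  have ha_bdd : ∀ j, BddAbove (Set.range fun x : EuclideanSpace ℝ (Fin n) =>
      ∫ y in Metric.ball x ρ0, |u j y| ^ q) := by
    intro j
    refine ⟨Cb, ?_⟩
    rintro r ⟨x, rfl⟩
    exact le_trans (htot j _) (hup j)
  have ha_nonneg : ∀ j, 0 ≤ a j := by
    intro j
    exact le_trans (hnn j (Metric.ball 0 ρ0)) (le_ciSup (ha_bdd j) 0)
  -- get δ > 0 and a subsequence with a (σ0 j) ≥ δ
  rw [Metric.tendsto_atTop] at hnt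
  push_neg at hnt
  obtain ⟨δ, hδpos, hδ⟩ := hnt
  have hfr : ∃ᶠ m in atTop, δ ≤ a m := by
    rw [frequently_atTop]
    intro N
    obtain ⟨m, hm, h⟩ := hδ N
    refine ⟨m, hm, ?_⟩
    rw [Real.dist_eq, sub_zero, abs_of_nonneg (ha_nonneg m)] at h
    exact h
  obtain ⟨σ0, hσ0, hσ0P⟩ := extraction_of_frequently_atTop hfr
  -- choose near-maximizing centers
  have hchoice : ∀ j : ℕ, ∃ xx : EuclideanSpace ℝ (Fin n),
      δ / 2 < ∫ y in Metric.ball xx ρ0, |u (σ0 j) y| ^ q := by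
    intro j
    by_contra h
    push_neg at h
    have : a (σ0 j) ≤ δ / 2 := ciSup_le h
    have := hσ0P j
    linarith
  choose xc hxc using hchoice
  -- the array of ball masses and totals
  set F : ℕ → ℕ → ℝ := fun j m =>
    Nat.rec (∫ y, |u (σ0 j) y| ^ q)
      (fun m' _ => ∫ y in Metric.ball (xc j) (ρ0 + (m' : ℝ)), |u (σ0 j) y| ^ q) m with hF_def
  have hF0 : ∀ j, F j 0 = ∫ y, |u (σ0 j) y| ^ q := fun j => rfl
  have hFS : ∀ j m, F j (m + 1) = ∫ y in Metric.ball (xc j) (ρ0 + (m : ℝ)), |u (σ0 j) y| ^ q :=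
    fun j m => rfl
  have hF : ∀ j m, F j m ∈ Set.Icc (0:ℝ) Cb := by
    intro j m
    cases m with
    | zero => exact ⟨integral_nonneg (fun y => hf0 _ y), hup _⟩
    | succ m' => exact ⟨hnn _ _, le_trans (htot _ _) (hup _)⟩
  obtain ⟨τ, g, hτ, hg, hgt⟩ := subseq_pi Cb F hF
  set T : ℝ := g 0 with hT_def
  set β : ℕ → ℝ := fun m => g (m + 1) with hβ_def
  have hT_ge_c : c ≤ T :=
    ge_of_tendsto (hgt 0) (Eventually.of_forall fun j => hlow (σ0 (τ j)))
  have hT_pos : 0 < T := lt_of_lt_of_le hc hT_ge_c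
  have hβ_le_T : ∀ m, β m ≤ T := by
    intro m
    refine le_of_tendsto_of_tendsto' (hgt (m + 1)) (hgt 0) fun j => ?_
    rw [hFS, hF0]
    exact htot _ _
  have hβ_bdd : BddAbove (Set.range β) := by
    refine ⟨T, ?_⟩
    rintro r ⟨m, rfl⟩
    exact hβ_le_T m
  set V : ℝ := ⨆ m, β m with hV_def
  have hV_le_T : V ≤ T := ciSup_le hβ_le_T
  have hβ0 : δ / 2 ≤ β 0 := by
    refine ge_of_tendsto (hgt 1) (Eventually.of_forall fun j => ?_)
    show δ / 2 ≤ F (τ j) 1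
    calc δ / 2 ≤ ∫ y in Metric.ball (xc (τ j)) ρ0, |u (σ0 (τ j)) y| ^ q := le_of_lt (hxc (τ j))
    _ ≤ ∫ y in Metric.ball (xc (τ j)) (ρ0 + ((0:ℕ):ℝ)), |u (σ0 (τ j)) y| ^ q :=
        hmono _ _ _ (Metric.ball_subset_ball (by simp))
    _ = F (τ j) 1 := (hFS (τ j) 0).symm
  have hV_pos : 0 < V := by
    have := le_ciSup hβ_bdd 0
    have h2 : (0:ℝ) < δ / 2 := by linarith
    calc (0:ℝ) < δ / 2 := h2
    _ ≤ β 0 := hβ0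
    _ ≤ V := le_ciSup hβ_bdd 0
  set lam : ℝ := V / T with hlam_def
  have hlam_mem : lam ∈ Set.Ioc (0:ℝ) 1 :=
    ⟨div_pos hV_pos hT_pos, (div_le_one hT_pos).2 hV_le_T⟩
  have hlam_le1 : lam ≤ 1 := hlam_mem.2
  have hlam_nonneg : 0 ≤ lam := le_of_lt hlam_mem.1
  have hlamT : lam * T = V := div_mul_cancel₀ V (ne_of_gt hT_pos)
  refine ⟨σ0 ∘ τ, hσ0.comp hτ, Or.inl ⟨lam, hlam_mem, fun j => xc (τ j), ?_⟩⟩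
  intro ε hε
  set δ' : ℝ := ε * c / 8 with hδ'_def
  have hδ'pos : 0 < δ' := by
    have := mul_pos hε hc
    positivity
  obtain ⟨M, hM⟩ : ∃ M, V - δ' < β M := by
    refine exists_lt_of_lt_ciSup ?_
    rw [← hV_def]
    linarith
  -- uniform convergence indices
  have hN1 : ∀ m : ℕ, ∃ N, ∀ j ≥ N, |F (τ j) m - g m| < δ' := by
    intro m
    obtain ⟨N, hN⟩ := Metric.tendsto_atTop.1 (hgt m) δ' hδ'pos
    exact ⟨N, fun j hj => by simpa [Real.dist_eq] using hN j hj⟩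
  choose N1 hN1 using hN1
  set Nf : ℕ → ℕ := fun m => Finset.sup (Finset.range (m + 2)) N1 with hNf_def
  have hNf_le : ∀ m m', m' ≤ m + 1 → N1 m' ≤ Nf m := by
    intro m m' hm'
    exact Finset.le_sup (Finset.mem_range.2 (by omega))
  have hNf_mono : Monotone Nf := by
    intro a b hab
    exact Finset.sup_mono (Finset.range_subset_range.2 (by omega))
  refine ⟨ρ0 + (M : ℝ), by positivity, fun j => ρ0 + (Nat.findGreatest (fun m => Nf m ≤ j) j : ℝ),
    ?_, max (Nf M) M, ?_⟩
  · -- tendsto atTop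
    rw [Filter.tendsto_atTop]
    intro b
    rw [eventually_atTop]
    refine ⟨max (Nf ⌈b⌉₊) ⌈b⌉₊, fun j hj => ?_⟩
    have h1 : ⌈b⌉₊ ≤ Nat.findGreatest (fun m => Nf m ≤ j) j :=
      Nat.le_findGreatest (le_trans (le_max_right _ _) hj) (le_trans (le_max_left _ _) hj)
    have h2 : b ≤ (⌈b⌉₊ : ℝ) := Nat.le_ceil b
    have h3 : ((⌈b⌉₊ : ℕ) : ℝ) ≤ ((Nat.findGreatest (fun m => Nf m ≤ j) j : ℕ) : ℝ) :=
      Nat.cast_le.2 h1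
    linarith
  · intro j hj
    simp only [Function.comp_apply]
    set mj : ℕ := Nat.findGreatest (fun m => Nf m ≤ j) j with hmj_def
    have hjM : Nf M ≤ j := le_trans (le_max_left _ _) hj
    have hMj : M ≤ j := le_trans (le_max_right _ _) hj
    have hmjP : Nf mj ≤ j :=
      Nat.findGreatest_spec (P := fun m => Nf m ≤ j) (n := j) hMj hjM
    have hMmj : M ≤ mj := Nat.le_findGreatest hMj hjM
    -- abbreviations
    set Tj : ℝ := ∫ y, |u (σ0 (τ j)) y| ^ q with hTj_def
    set A : ℝ := ∫ y in Metric.ball (xc (τ j)) (ρ0 + (M : ℝ)), |u (σ0 (τ j)) y| ^ q with hA_def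
    set B : ℝ := ∫ y in Metric.ball (xc (τ j)) (ρ0 + (mj : ℝ)), |u (σ0 (τ j)) y| ^ q with hB_def
    have hTjc : c ≤ Tj := hlow _
    have hTT : |Tj - T| < δ' := hN1 0 j (le_trans (hNf_le M 0 (by omega)) hjM)
    have hAβ : |A - β M| < δ' := hN1 (M + 1) j (le_trans (hNf_le M (M + 1) (by omega)) hjM)
    have hBβ : |B - β mj| < δ' := hN1 (mj + 1) j (le_trans (hNf_le mj (mj + 1) (by omega)) hmjP)
    have hβmjV : β mj ≤ V := le_ciSup hβ_bdd mj
    have hβMV : β M ≤ V := le_ciSup hβ_bdd M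
    have hAB : A ≤ B := by
      refine hmono _ _ _ (Metric.ball_subset_ball ?_)
      have : (M : ℝ) ≤ (mj : ℝ) := Nat.cast_le.2 hMmj
      linarith
    have hcompl : (∫ y in (Metric.ball (xc (τ j)) (ρ0 + (mj : ℝ)))ᶜ, |u (σ0 (τ j)) y| ^ q)
        = Tj - B := by
      have := integral_add_compl (measurableSet_ball
        (x := xc (τ j)) (ε := ρ0 + (mj : ℝ))) (hint (σ0 (τ j)))
      rw [hTj_def, hB_def]
      linarith [this]
    have hlamTj : |lam * Tj - V| < δ' := by
      have h1 : lam * Tj - V = lam * (Tj - T) := by rw [← hlamT]; ring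
      rw [h1, abs_mul, abs_of_nonneg hlam_nonneg]
      calc lam * |Tj - T| ≤ 1 * |Tj - T| :=
        mul_le_mul_of_nonneg_right hlam_le1 (abs_nonneg _)
      _ = |Tj - T| := one_mul _
      _ < δ' := hTT
    -- final estimate
    rw [hcompl]
    have habsA : |A - β M| < δ' := hAβ
    have e1 : |A - lam * Tj| < 3 * δ' := by
      rw [abs_lt] at habsA hlamTj ⊢
      constructor <;> linarith
    have e2 : |Tj - B - (1 - lam) * Tj| < 3 * δ' := by
      have hBV : |B - V| < 2 * δ' := by
        have h1 := abs_lt.1 hBβ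
        have h2 := abs_lt.1 hAβ
        rw [abs_lt]
        constructor
        · linarith [hM, hAB]
        · linarith [hβmjV]
      have hrew : Tj - B - (1 - lam) * Tj = (lam * Tj - V) + (V - B) := by ring
      rw [hrew]
      calc |lam * Tj - V + (V - B)| ≤ |lam * Tj - V| + |V - B| := abs_add_le _ _
      _ < δ' + 2 * δ' := by
          have : |V - B| = |B - V| := abs_sub_comm _ _
          rw [this]
          exact add_lt_add hlamTj hBV
      _ = 3 * δ' := by ring
    have hfin : ε * c ≤ ε * Tj := mul_le_mul_of_nonneg_left hTjc (le_of_lt hε)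
    calc |A - lam * Tj| + |Tj - B - (1 - lam) * Tj| < 3 * δ' + 3 * δ' := by linarith
    _ = 6 * δ' := by ring
    _ < ε * c := by rw [hδ'_def]; linarith
    _ ≤ ε * Tj := hfin
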